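/- Let V : ℝⁿ → ℝⁿ be a C¹ vector field admitting a global flow Φ (i.e. Φ₀ = id and for every ρ the curve t ↦ Φ_t(ρ) is differentiable with derivative V(Φ_t(ρ))), and assume the flow is periodic with period T > 0, i.e. Φ_{t+T}(ρ) = Φ_t(ρ) for all t ∈ ℝ and ρ ∈ ℝⁿ. Let q : ℝⁿ → ℝ be continuous, and define the trajectory average ⟨q⟩(ρ) = (1/T) ∫_{-T/2}^{T/2} q(Φ_t(ρ)) dt and the function G₀(ρ) = (1/T) ( ∫_{-T/2}^{0} (t + T/2) q(Φ_t(ρ)) dt + ∫_{0}^{T/2} (t - T/2) q(Φ_t(ρ)) dt ). Then for every ρ ∈ ℝⁿ the function u ↦ G₀(Φ_u(ρ)) is differentiable at u = 0 and its derivative there equals q(ρ) − ⟨q⟩(ρ). (In the Hamiltonian case V = H_p this says H_p G₀ = q − ⟨q⟩.) -/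

import Mathlib

open intervalIntegral

lemma ftc_cont {g : ℝ → ℝ} (hg : Continuous g) (x : ℝ) :
    HasDerivAt (fun u => ∫ s in (0:ℝ)..u, g s) (g x) x :=
  integral_hasDerivAt_right (hg.intervalIntegrable _ _)
    (hg.stronglyMeasurable.stronglyMeasurableAtFilter) hg.continuousAt

lemma weight_int {f : ℝ → ℝ} (hf : Continuous f) (a b c : ℝ) :
    (∫ s in a..b, (s + c) * f s) =
      ((∫ s in (0:ℝ)..b, s * f s) - ∫ s in (0:ℝ)..a, s * f s)
      + c * ((∫ s in (0:ℝ)..b, f s) - ∫ s in (0:ℝ)..a, f s) := by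
  have h1 : Continuous fun s => s * f s := continuous_id.mul hf
  rw [intervalIntegral.integral_interval_sub_left (h1.intervalIntegrable _ _)
    (h1.intervalIntegrable _ _),
    intervalIntegral.integral_interval_sub_left (hf.intervalIntegrable _ _)
    (hf.intervalIntegrable _ _), ← intervalIntegral.integral_const_mul,
    ← intervalIntegral.integral_add (f := fun s => s * f s) (g := fun s => c * f s) (h1.intervalIntegrable _ _)
      ((continuous_const.mul hf : Continuous fun s => c * f s).intervalIntegrable _ _)]
  congr 1; ext s; ring

theorem statement0 (n : ℕ) (V : (Fin n → ℝ) → (Fin n → ℝ)) (hV : ContDiff ℝ 1 V)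
    (Φ : ℝ → (Fin n → ℝ) → (Fin n → ℝ))
    (hΦ0 : ∀ ρ, Φ 0 ρ = ρ)
    (hΦflow : ∀ s t ρ, Φ (s + t) ρ = Φ s (Φ t ρ))
    (hΦderiv : ∀ (t : ℝ) (ρ : Fin n → ℝ), HasDerivAt (fun s => Φ s ρ) (V (Φ t ρ)) t)
    (T : ℝ) (hT : 0 < T)
    (hper : ∀ (t : ℝ) (ρ : Fin n → ℝ), Φ (t + T) ρ = Φ t ρ)
    (q : (Fin n → ℝ) → ℝ) (hq : Continuous q)
    (qavg G₀ : (Fin n → ℝ) → ℝ)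
    (hqavg : ∀ ρ, qavg ρ = (1 / T) * ∫ t in (-(T/2))..(T/2), q (Φ t ρ))
    (hG₀ : ∀ ρ, G₀ ρ = (1 / T) *
      ((∫ t in (-(T/2))..(0:ℝ), (t + T/2) * q (Φ t ρ)) +
       ∫ t in (0:ℝ)..(T/2), (t - T/2) * q (Φ t ρ)))
    (ρ : Fin n → ℝ) :
    HasDerivAt (fun u => G₀ (Φ u ρ)) (q ρ - qavg ρ) 0 := by
  set f : ℝ → ℝ := fun s => q (Φ s ρ) with hf_def
  have hΦcont : Continuous fun s => Φ s ρ :=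
    Differentiable.continuous (fun t => (hΦderiv t ρ).differentiableAt)
  have hf : Continuous f := hq.comp hΦcont
  set P : ℝ → ℝ := fun x => ∫ s in (0:ℝ)..x, s * f s with hP_def
  set Q : ℝ → ℝ := fun x => ∫ s in (0:ℝ)..x, f s with hQ_def
  have h1 : Continuous fun s => s * f s := continuous_id.mul hf
  -- key: rewrite G₀ (Φ u ρ) in terms of P, Q
  have key : ∀ u : ℝ, G₀ (Φ u ρ) = (1/T) *
      ((P u - P (u - T/2) + (T/2 - u) * (Q u - Q (u - T/2)))
       + (P (u + T/2) - P u + (-(T/2) - u) * (Q (u + T/2) - Q u))) := by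
    intro u
    rw [hG₀]
    have e1 : ∀ t : ℝ, q (Φ t (Φ u ρ)) = f (t + u) := by
      intro t; rw [← hΦflow]
    congr 1
    have c1 : (∫ t in (-(T/2))..(0:ℝ), (t + T/2) * q (Φ t (Φ u ρ)))
        = ∫ s in (u - T/2)..u, (s + (T/2 - u)) * f s := by
      have : (∫ t in (-(T/2))..(0:ℝ), (t + T/2) * q (Φ t (Φ u ρ)))
          = ∫ t in (-(T/2))..(0:ℝ), ((t + u) + (T/2 - u)) * f (t + u) := by
        congr 1; ext t; rw [e1]; ring_nf
      rw [this, intervalIntegral.integral_comp_add_right (fun s => (s + (T/2 - u)) * f s) u,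
        show -(T/2) + u = u - T/2 from by ring, show (0:ℝ) + u = u from by ring]
    have c2 : (∫ t in (0:ℝ)..(T/2), (t - T/2) * q (Φ t (Φ u ρ)))
        = ∫ s in u..(u + T/2), (s + (-(T/2) - u)) * f s := by
      have : (∫ t in (0:ℝ)..(T/2), (t - T/2) * q (Φ t (Φ u ρ)))
          = ∫ t in (0:ℝ)..(T/2), ((t + u) + (-(T/2) - u)) * f (t + u) := by
        congr 1; ext t; rw [e1]; ring_nf
      rw [this, intervalIntegral.integral_comp_add_right (fun s => (s + (-(T/2) - u)) * f s) u,
        show (0:ℝ) + u = u from by ring, show T/2 + u = u + T/2 from by ring]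
    rw [c1, c2, weight_int hf, weight_int hf]
  -- derivatives of the pieces at 0
  have hPd : ∀ x, HasDerivAt P (x * f x) x := fun x => ftc_cont h1 x
  have hQd : ∀ x, HasDerivAt Q (f x) x := fun x => ftc_cont hf x
  have hsub : HasDerivAt (fun u : ℝ => u - T/2) 1 0 := by
    simpa using (hasDerivAt_id (0:ℝ)).sub_const (T/2)
  have hadd : HasDerivAt (fun u : ℝ => u + T/2) 1 0 := by
    simpa using (hasDerivAt_id (0:ℝ)).add_const (T/2)
  have hP1 : HasDerivAt (fun u => P (u - T/2)) ((0 - T/2) * f (0 - T/2)) 0 := by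
    simpa [Function.comp_def] using (hPd (0 - T/2)).comp 0 hsub
  have hP2 : HasDerivAt (fun u => P (u + T/2)) ((0 + T/2) * f (0 + T/2)) 0 := by
    simpa [Function.comp_def] using (hPd (0 + T/2)).comp 0 hadd
  have hQ1 : HasDerivAt (fun u => Q (u - T/2)) (f (0 - T/2)) 0 := by
    simpa [Function.comp_def] using (hQd (0 - T/2)).comp 0 hsub
  have hQ2 : HasDerivAt (fun u => Q (u + T/2)) (f (0 + T/2)) 0 := by
    simpa [Function.comp_def] using (hQd (0 + T/2)).comp 0 hadd
  have hid : HasDerivAt (fun u : ℝ => T/2 - u) (-1) 0 := by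
    exact (hasDerivAt_id (0:ℝ)).const_sub (T/2)
  have hid2 : HasDerivAt (fun u : ℝ => -(T/2) - u) (-1) 0 := by
    exact (hasDerivAt_id (0:ℝ)).const_sub (-(T/2))
  have hbig : HasDerivAt (fun u =>
      (P u - P (u - T/2) + (T/2 - u) * (Q u - Q (u - T/2)))
       + (P (u + T/2) - P u + (-(T/2) - u) * (Q (u + T/2) - Q u)))
      (((0 * f 0 - (0 - T/2) * f (0 - T/2))
        + ((-1) * (Q 0 - Q (0 - T/2)) + (T/2 - 0) * (f 0 - f (0 - T/2))))
       + (((0 + T/2) * f (0 + T/2) - 0 * f 0)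
        + ((-1) * (Q (0 + T/2) - Q 0) + (-(T/2) - 0) * (f (0 + T/2) - f 0)))) 0 := by
    exact (((hPd 0).sub hP1).add (hid.mul ((hQd 0).sub hQ1))).add
      ((hP2.sub (hPd 0)).add (hid2.mul (hQ2.sub (hQd 0))))
  have hfun : HasDerivAt (fun u => G₀ (Φ u ρ)) ((1/T) *
      (((0 * f 0 - (0 - T/2) * f (0 - T/2))
        + ((-1) * (Q 0 - Q (0 - T/2)) + (T/2 - 0) * (f 0 - f (0 - T/2))))
       + (((0 + T/2) * f (0 + T/2) - 0 * f 0)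
        + ((-1) * (Q (0 + T/2) - Q 0) + (-(T/2) - 0) * (f (0 + T/2) - f 0))))) 0 := by
    have := hbig.const_mul (1/T)
    refine HasDerivAt.congr_of_eventuallyEq this ?_
    filter_upwards with u using (key u)
  convert hfun using 1
  -- now arithmetic: q ρ - qavg ρ equals the expression
  have hfper : f (0 - T/2) = f (0 + T/2) := by
    simp only [hf_def]
    have := hper (-(T/2)) ρ
    rw [show (0:ℝ) - T/2 = -(T/2) by ring, show (0:ℝ) + T/2 = -(T/2) + T by ring, this]
  have hQint : Q (0 + T/2) - Q (0 - T/2) = ∫ t in (-(T/2))..(T/2), f t := by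
    simp only [hQ_def, zero_add, zero_sub]
    exact intervalIntegral.integral_interval_sub_left
      (hf.intervalIntegrable 0 (T/2)) (hf.intervalIntegrable 0 (-(T/2)))
  have hf0 : f 0 = q ρ := by simp [hf_def, hΦ0]
  rw [hqavg]
  have hT' : T ≠ 0 := ne_of_gt hT
  rw [show (∫ t in (-(T/2))..(T/2), q (Φ t ρ)) = Q (0 + T/2) - Q (0 - T/2) from hQint.symm]
  rw [← hf0, hfper]
  field_simp
  ring
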